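/- Let Ω be a type, n a natural number, E a type of events with supports S : E → Set (Fin n) and update maps U : E → ((Fin n → Set Ω) → (Fin n → Set Ω)), and let R⁰ : Fin n → Set Ω be an initial state. Assume the diamond property at reachable states: for every reachable state R and all events e, f with disjoint supports, U e (U f R) = U f (U e R). Define the one-step swap relation on lists of events: l₁ ∼ l₂ iff there exist lists xs, ys and events e, f with disjoint supports such that l₁ = xs ++ e :: f :: ys and l₂ = xs ++ f :: e :: ys. Then for any two lists l₁, l₂ related by the equivalence closure Relation.EqvGen (∼) of the swap relation (i.e. l₁ and l₂ are trace-equivalent schedules), executing l₁ from R⁰ and executing l₂ from R⁰ yield the same final record state. -/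
import Mathlib

/-- Executing a list of events from an initial state: left fold of their update maps. -/
def exec {Ω E : Type*} {n : ℕ} (U : E → (Fin n → Set Ω) → (Fin n → Set Ω))
    (R0 : Fin n → Set Ω) (l : List E) : Fin n → Set Ω := l.foldl (fun R e => U e R) R0

/-- A state is reachable if it arises by executing some finite list of events from `R0`. -/
def Reachable {Ω E : Type*} {n : ℕ} (U : E → (Fin n → Set Ω) → (Fin n → Set Ω))
    (R0 : Fin n → Set Ω) (R : Fin n → Set Ω) : Prop := ∃ l : List E, R = exec U R0 l

/-- One-step swap of two adjacent independent events in a schedule. -/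
def Swap {E : Type*} {n : ℕ} (S : E → Set (Fin n)) (l₁ l₂ : List E) : Prop :=
  ∃ (xs ys : List E) (e f : E), Disjoint (S e) (S f) ∧
    l₁ = xs ++ e :: f :: ys ∧ l₂ = xs ++ f :: e :: ys

/-- Trace invariance: under the diamond property at reachable states, trace-equivalent
schedules (related by the equivalence closure of adjacent independent swaps) produce
the same final record state. -/
theorem trace_invariance {Ω E : Type*} {n : ℕ}
    (S : E → Set (Fin n)) (U : E → (Fin n → Set Ω) → (Fin n → Set Ω))
    (R0 : Fin n → Set Ω)
    (diamond : ∀ R : Fin n → Set Ω, Reachable U R0 R → ∀ e f : E,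
      Disjoint (S e) (S f) → U e (U f R) = U f (U e R)) :
    ∀ l₁ l₂ : List E, Relation.EqvGen (Swap S) l₁ l₂ →
      exec U R0 l₁ = exec U R0 l₂ := by
  have key : ∀ l₁ l₂, Swap S l₁ l₂ → exec U R0 l₁ = exec U R0 l₂ := by
    rintro l₁ l₂ ⟨xs, ys, e, f, hdisj, rfl, rfl⟩
    simp only [exec, List.foldl_append, List.foldl_cons]
    have := diamond (List.foldl (fun R e => U e R) R0 xs) ⟨xs, rfl⟩ f e hdisj.symm
    rw [this]
  intro l₁ l₂ h
  induction h with
  | rel a b hab => exact key a b hab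
  | refl => rfl
  | symm _ _ _ ih => exact ih.symm
  | trans _ _ _ _ _ ih1 ih2 => exact ih1.trans ih2
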